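/- Let g > 1 and λ ∈ [0,1] be real and let N, K be natural numbers with K ≥ 1. For F ∈ ℕ define P_F = ∑_{P=0}^{min(F,N)} C(N,P)·C(K+F−1, F−P)·λ^P·(1−λ)^{N−P}·(g−1)^{F−P} / g^{K+F}. Then for every x ∈ [0,1] the series ∑_{F=0}^{∞} P_F·x^F converges and equals ( g(1−λ) + (1 + gλ − g)·x )^N / ( g − (g−1)·x )^{N+K}. In particular, taking x = 1, ∑_{F=0}^{∞} P_F = 1, so (P_F)_{F∈ℕ} is a probability distribution (the outcome distribution of a total photon number measurement at the output of K parallel uses of the channel N_{g,λ} applied to a K-mode Fock state with N total photons). -/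

import Mathlib

open Finset

/-- For `g > 1`, `λ ∈ [0,1]` and naturals `N, K` with `K ≥ 1`, let
`P_F = ∑_{P=0}^{min(F,N)} C(N,P)·C(K+F−1,F−P)·λ^P·(1−λ)^{N−P}·(g−1)^{F−P}/g^{K+F}`. Then for
every `x ∈ [0,1]` the series `∑_F P_F·x^F` converges to
`(g(1−λ) + (1+gλ−g)x)^N / (g − (g−1)x)^{N+K}`; in particular `∑_F P_F = 1`, so `(P_F)` is a
probability distribution (the total-photon-number output distribution of `K` parallel uses of
`N_{g,λ}` on a `K`-mode Fock state with `N` photons). -/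
theorem stmt17 (g lam : ℝ) (hg : 1 < g) (hlam : lam ∈ Set.Icc (0 : ℝ) 1)
    (N K : ℕ) (hK : 1 ≤ K) (Pf : ℕ → ℝ)
    (hPf : ∀ F, Pf F = ∑ P ∈ Finset.range (min F N + 1),
      (N.choose P : ℝ) * ((K + F - 1).choose (F - P)) * lam ^ P * (1 - lam) ^ (N - P)
        * (g - 1) ^ (F - P) / g ^ (K + F)) :
    (∀ x ∈ Set.Icc (0 : ℝ) 1,
      HasSum (fun F => Pf F * x ^ F)
        ((g * (1 - lam) + (1 + g * lam - g) * x) ^ N / (g - (g - 1) * x) ^ (N + K))) ∧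
    HasSum Pf 1 := by
  obtain ⟨hl0, hl1⟩ := hlam
  have hg0 : (0:ℝ) < g := lt_trans one_pos hg
  have main : ∀ x ∈ Set.Icc (0 : ℝ) 1,
      HasSum (fun F => Pf F * x ^ F)
        ((g * (1 - lam) + (1 + g * lam - g) * x) ^ N / (g - (g - 1) * x) ^ (N + K)) := by
    intro x hx
    obtain ⟨hx0, hx1⟩ := hx
    set y := g - (g - 1) * x with hy
    have hy0 : 0 < y := by nlinarith
    set t := (g - 1) * x / g with ht
    have ht0 : 0 ≤ t := div_nonneg (by nlinarith) hg0.le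
    have ht1 : t < 1 := by rw [ht, div_lt_one hg0]; nlinarith
    have htnorm : ‖t‖ < 1 := by rw [Real.norm_eq_abs, abs_of_nonneg ht0]; exact ht1
    have h1t : 1 - t = y / g := by rw [ht, hy]; field_simp
    have key : ∀ P ∈ Finset.range (N + 1),
        HasSum (fun F => if P ≤ F then
            ((N.choose P : ℝ) * ((K + F - 1).choose (F - P)) * lam ^ P * (1 - lam) ^ (N - P)
              * (g - 1) ^ (F - P) / g ^ (K + F)) * x ^ F else 0)
          ((N.choose P : ℝ) * lam ^ P * (1 - lam) ^ (N - P) * x ^ P / y ^ (K + P)) := by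
      intro P _
      have base := hasSum_choose_mul_geometric_of_norm_lt_one (𝕜 := ℝ) (K + P - 1) htnorm
      have h2 := base.mul_left ((N.choose P : ℝ) * lam ^ P * (1 - lam) ^ (N - P) * x ^ P / g ^ (K + P))
      have hinj : Function.Injective (fun n : ℕ => n + P) := add_left_injective P
      rw [show (N.choose P : ℝ) * lam ^ P * (1 - lam) ^ (N - P) * x ^ P / y ^ (K + P)
          = (N.choose P : ℝ) * lam ^ P * (1 - lam) ^ (N - P) * x ^ P / g ^ (K + P)
            * (1 / (1 - t) ^ (K + P - 1 + 1)) by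
        rw [h1t, div_pow, show K + P - 1 + 1 = K + P by omega]
        field_simp]
      rw [← hinj.hasSum_iff]
      · apply h2.congr_fun
        intro n
        have hc : ((K + (n + P) - 1).choose (n + P - P) : ℝ)
            = ((n + (K + P - 1)).choose (K + P - 1) : ℝ) := by
          congr 1
          rw [show n + P - P = n by omega, show K + (n + P) - 1 = n + (K + P - 1) by omega]
          rw [← Nat.choose_symm (Nat.le_add_left _ _), show n + (K + P - 1) - (K + P - 1) = n by omega]
        simp only [Function.comp, le_add_iff_nonneg_left, Nat.zero_le, if_true, if_pos (Nat.le_add_left P n)]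
        rw [hc, ht, Nat.add_sub_cancel]
        rw [show K + (n + P) = K + P + n by omega, pow_add, pow_add, div_pow, mul_pow]
        field_simp
        ring
      · intro F hF
        have hFP : ¬ P ≤ F := by
          intro h
          exact hF ⟨F - P, by simpa using Nat.sub_add_cancel h⟩
        rw [if_neg hFP]
    have total := hasSum_sum key
    have hfun : (fun F => Pf F * x ^ F) = (fun F => ∑ P ∈ Finset.range (N + 1),
        if P ≤ F then
            ((N.choose P : ℝ) * ((K + F - 1).choose (F - P)) * lam ^ P * (1 - lam) ^ (N - P)
              * (g - 1) ^ (F - P) / g ^ (K + F)) * x ^ F else 0) := by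
      funext F
      rw [hPf, Finset.sum_mul, Finset.sum_ite, Finset.sum_const_zero, add_zero]
      have hset : (Finset.range (N + 1)).filter (fun P => P ≤ F) = Finset.range (min F N + 1) := by
        ext a
        simp only [Finset.mem_filter, Finset.mem_range, Nat.lt_succ_iff]
        omega
      rw [hset]
    have hval : (∑ P ∈ Finset.range (N + 1),
        (N.choose P : ℝ) * lam ^ P * (1 - lam) ^ (N - P) * x ^ P / y ^ (K + P))
        = (g * (1 - lam) + (1 + g * lam - g) * x) ^ N / y ^ (N + K) := by
      have hbin : (lam * x + (1 - lam) * y) ^ N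
          = ∑ P ∈ Finset.range (N + 1), (lam * x) ^ P * ((1 - lam) * y) ^ (N - P) * N.choose P :=
        add_pow (lam * x) ((1 - lam) * y) N
      have hsum : g * (1 - lam) + (1 + g * lam - g) * x = lam * x + (1 - lam) * y := by
        rw [hy]; ring
      rw [hsum, hbin, Finset.sum_div]
      apply Finset.sum_congr rfl
      intro P hP
      simp only [Finset.mem_range, Nat.lt_succ_iff] at hP
      rw [show N + K = (K + P) + (N - P) by omega, pow_add, mul_pow, mul_pow]
      field_simp
      ring
    rw [hfun, ← hval]
    exact total
  refine ⟨main, ?_⟩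
  have h := main 1 ⟨zero_le_one, le_refl 1⟩
  have h1 : (g * (1 - lam) + (1 + g * lam - g) * 1) ^ N / (g - (g - 1) * 1) ^ (N + K) = 1 := by
    have e1 : g * (1 - lam) + (1 + g * lam - g) * 1 = 1 := by ring
    rw [e1]
    norm_num
  rw [h1] at h
  simpa using h
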